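/- Let (Ω, m) be a probability space and let P be a linear operator on L¹(m) given by an integral kernel K : Ω × Ω → ℝ, i.e. (Pφ)(x) = ∫_Ω K(x,z)·φ(z) dm(z), with K(x,z) ≥ γ > 0 for all x,z, and P1 = 1 (i.e. ∫K(x,z)dm(x) = 1 for all z). Then for every φ ∈ L¹(m) with ∫_Ω φ dm = 0, ‖Pφ‖₁ ≤ (1−γ)·‖φ‖₁, and consequently ‖P^k φ‖₁ ≤ (1−γ)^k·‖φ‖₁ for all k ∈ ℕ. -/

import Mathlib

open MeasureTheory

lemma doeblin_aux
    {Ω : Type*} [MeasureSpace Ω] [IsProbabilityMeasure (volume : Measure Ω)]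
    (K : Ω → Ω → ℝ) (γ : ℝ) (hγ : 0 < γ)
    (hKmeas : Measurable (Function.uncurry K))
    (hKlow : ∀ x z, γ ≤ K x z)
    (hKnorm : ∀ z, ∫ x, K x z = 1)
    (ψ : Ω → ℝ) (hψ : Integrable ψ) (hψ0 : ∫ x, ψ x = 0) :
    Integrable (fun x => ∫ z, K x z * ψ z) ∧
      (∫ x, ∫ z, K x z * ψ z) = 0 ∧
      (∫ x, |∫ z, K x z * ψ z|) ≤ (1 - γ) * ∫ x, |ψ x| := by
  have hKnn : ∀ x z, 0 ≤ K x z := fun x z => le_trans hγ.le (hKlow x z)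
  -- integrability of K(·,z)
  have hKint : ∀ z, Integrable (fun x => K x z) := by
    intro z
    by_contra h
    have h1 := hKnorm z
    rw [integral_undef h] at h1
    exact zero_ne_one h1
  -- product integrability of (x,z) ↦ K x z * g z for integrable g
  have key : ∀ g : Ω → ℝ, Integrable g →
      Integrable (fun p : Ω × Ω => K p.1 p.2 * g p.2)
        ((volume : Measure Ω).prod volume) := by
    intro g hg
    have hmeas : AEStronglyMeasurable (fun p : Ω × Ω => K p.1 p.2 * g p.2)
        ((volume : Measure Ω).prod volume) := by
      exact (hKmeas.aestronglyMeasurable).mul hg.aestronglyMeasurable.comp_snd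
    rw [integrable_prod_iff' hmeas]
    constructor
    · filter_upwards with z
      exact (hKint z).mul_const _
    · have heq : ∀ z, (∫ x, ‖K x z * g z‖) = |g z| := by
        intro z
        have : ∀ x, ‖K x z * g z‖ = K x z * |g z| := by
          intro x
          rw [Real.norm_eq_abs, abs_mul, abs_of_nonneg (hKnn x z)]
        simp only [this, integral_mul_const, hKnorm z, one_mul]
      exact (hg.abs.congr (by filter_upwards with z; exact (heq z).symm))
  have hF := key ψ hψ
  have hFabs := key (fun z => |ψ z|) hψ.abs
  -- Integrable (P ψ)
  have hint : Integrable (fun x => ∫ z, K x z * ψ z) := hF.integral_prod_left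
  refine ⟨hint, ?_, ?_⟩
  · -- mean zero
    have := integral_integral_swap (f := fun x z => K x z * ψ z) hF
    rw [this]
    have : ∀ z, (∫ x, K x z * ψ z) = ψ z := by
      intro z
      rw [integral_mul_const, hKnorm z, one_mul]
    simp only [this, hψ0]
  · -- contraction
    -- pointwise a.e. bound: |∫ K x z ψ z| ≤ ∫ (K x z - γ)|ψ z|
    have hγψ : Integrable (fun z => γ * ψ z) := hψ.const_mul γ
    have hγψ0 : (∫ z, γ * ψ z) = 0 := by rw [integral_const_mul, hψ0, mul_zero]
    have hbound : ∀ᵐ x ∂(volume : Measure Ω),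
        |∫ z, K x z * ψ z| ≤ ∫ z, (K x z - γ) * |ψ z| := by
      filter_upwards [hF.prod_right_ae] with x hx
      have h1 : (∫ z, K x z * ψ z) = ∫ z, (K x z - γ) * ψ z := by
        rw [show (fun z => (K x z - γ) * ψ z) = fun z => K x z * ψ z - γ * ψ z by
          funext z; ring, integral_sub hx hγψ, hγψ0, sub_zero]
      rw [h1]
      calc |∫ z, (K x z - γ) * ψ z| ≤ ∫ z, |K x z - γ| * |ψ z| := by
            simpa [Real.norm_eq_abs, abs_mul] using
              norm_integral_le_integral_norm (μ := (volume : Measure Ω))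
                (fun z => (K x z - γ) * ψ z)
        _ = ∫ z, (K x z - γ) * |ψ z| := by
            congr 1; funext z
            rw [abs_of_nonneg (sub_nonneg.2 (hKlow x z))]
    -- integrability of the majorant
    have hGprod : Integrable (fun p : Ω × Ω => (K p.1 p.2 - γ) * |ψ p.2|)
        ((volume : Measure Ω).prod volume) := by
      have hconst : Integrable (fun p : Ω × Ω => γ * |ψ p.2|)
          ((volume : Measure Ω).prod volume) := by
        have : Integrable (fun p : Ω × Ω => |ψ p.2|)
            ((volume : Measure Ω).prod volume) := by
          rw [integrable_prod_iff' hψ.abs.aestronglyMeasurable.comp_snd]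
          refine ⟨by filter_upwards with y; exact integrable_const _, ?_⟩
          exact hψ.abs.congr (by filter_upwards with y; simp)
        exact this.const_mul γ
      have := hFabs.sub hconst
      exact this.congr (by filter_upwards with p; simp only [Pi.sub_apply]; ring)
    have hG : Integrable (fun x => ∫ z, (K x z - γ) * |ψ z|) :=
      hGprod.integral_prod_left
    calc (∫ x, |∫ z, K x z * ψ z|)
        ≤ ∫ x, ∫ z, (K x z - γ) * |ψ z| := integral_mono_ae hint.abs hG hbound
      _ = ∫ z, ∫ x, (K x z - γ) * |ψ z| :=
          integral_integral_swap (f := fun x z => (K x z - γ) * |ψ z|) hGprod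
      _ = (1 - γ) * ∫ x, |ψ x| := by
          have : ∀ z, (∫ x, (K x z - γ) * |ψ z|) = (1 - γ) * |ψ z| := by
            intro z
            rw [integral_mul_const, integral_sub (hKint z) (integrable_const γ),
              hKnorm z, integral_const]
            simp
          simp only [this, integral_const_mul]
  
theorem doeblin_contraction
    {Ω : Type*} [MeasureSpace Ω] [IsProbabilityMeasure (volume : Measure Ω)]
    (K : Ω → Ω → ℝ) (γ : ℝ) (hγ : 0 < γ)
    (hKmeas : Measurable (Function.uncurry K))
    (hKlow : ∀ x z, γ ≤ K x z)
    (hKnorm : ∀ z, ∫ x, K x z = 1)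
    (P : (Ω → ℝ) → (Ω → ℝ))
    (hP : ∀ φ x, P φ x = ∫ z, K x z * φ z)
    (φ : Ω → ℝ) (hφ : Integrable φ) (hφ0 : ∫ x, φ x = 0) :
    (∫ x, |P φ x|) ≤ (1 - γ) * ∫ x, |φ x| ∧
      ∀ k : ℕ, (∫ x, |P^[k] φ x|) ≤ (1 - γ) ^ k * ∫ x, |φ x| := by
  have hne : Nonempty Ω := by
    by_contra h
    rw [not_nonempty_iff] at h
    have := measure_univ (μ := (volume : Measure Ω))
    simp [Measure.eq_zero_of_isEmpty (volume : Measure Ω)] at this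
  have hγ1 : γ ≤ 1 := by
    obtain ⟨z⟩ := hne
    have hKint : Integrable (fun x => K x z) := by
      by_contra h
      have h1 := hKnorm z
      rw [integral_undef h] at h1
      exact zero_ne_one h1
    calc γ = ∫ _x : Ω, γ := by simp
      _ ≤ ∫ x, K x z := integral_mono (integrable_const γ) hKint (fun x => hKlow x z)
      _ = 1 := hKnorm z
  have step : ∀ ψ : Ω → ℝ, Integrable ψ → (∫ x, ψ x) = 0 →
      Integrable (P ψ) ∧ (∫ x, P ψ x) = 0 ∧
        (∫ x, |P ψ x|) ≤ (1 - γ) * ∫ x, |ψ x| := by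
    intro ψ hψ hψ0
    obtain ⟨h1, h2, h3⟩ := doeblin_aux K γ hγ hKmeas hKlow hKnorm ψ hψ hψ0
    have hPψ : P ψ = fun x => ∫ z, K x z * ψ z := funext (hP ψ)
    rw [hPψ]
    exact ⟨h1, h2, h3⟩
  refine ⟨(step φ hφ hφ0).2.2, ?_⟩
  have main : ∀ k : ℕ, Integrable (P^[k] φ) ∧ (∫ x, P^[k] φ x) = 0 ∧
      (∫ x, |P^[k] φ x|) ≤ (1 - γ) ^ k * ∫ x, |φ x| := by
    intro k
    induction k with
    | zero =>
      simp only [Function.iterate_zero, id_eq, pow_zero, one_mul]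
      exact ⟨hφ, hφ0, le_refl _⟩
    | succ n ih =>
      obtain ⟨ih1, ih2, ih3⟩ := ih
      obtain ⟨h1, h2, h3⟩ := step _ ih1 ih2
      rw [Function.iterate_succ_apply']
      refine ⟨h1, h2, ?_⟩
      calc (∫ x, |P (P^[n] φ) x|) ≤ (1 - γ) * ∫ x, |P^[n] φ x| := h3
        _ ≤ (1 - γ) * ((1 - γ) ^ n * ∫ x, |φ x|) :=
            mul_le_mul_of_nonneg_left ih3 (by linarith)
        _ = (1 - γ) ^ (n + 1) * ∫ x, |φ x| := by ring
  exact fun k => (main k).2.2
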